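/- For every odd natural number n with n ≥ 7, the inequality (2π)^{n+1} · 2^n / (2 · (7^{(n+1)/2} − 1) · n!) < 2n + 2 holds. -/

import Mathlib

open Real

lemma aux_stmt_18 (m : ℕ) :
    (2 * π) ^ (7 + 2 * m + 1) * 2 ^ (7 + 2 * m) /
      (2 * ((7 : ℝ) ^ (4 + m) - 1) * (Nat.factorial (7 + 2 * m))) < 16 := by
  induction m with
  | zero =>
      have hpi : π < 3.15 := pi_lt_d2
      have hpi0 : 0 < π := pi_pos
      norm_num [Nat.factorial]
      rw [div_lt_iff₀ (by norm_num)]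
      nlinarith [pow_pos (mul_pos (by norm_num : (0:ℝ) < 2) hpi0) 8,
        pow_lt_pow_left₀ (by linarith : (2:ℝ) * π < 6.3) (by positivity) (by norm_num : 8 ≠ 0)]
  | succ k ih =>
      have hpi : π < 3.15 := pi_lt_d2
      have hpi0 : 0 < π := pi_pos
      have hc : (2401 : ℝ) ≤ 7 ^ (4 + k) := by
        calc (2401 : ℝ) = 7 ^ 4 := by norm_num
        _ ≤ 7 ^ (4 + k) := pow_le_pow_right₀ (by norm_num) (by omega)
      have hF : (5040 : ℝ) ≤ (Nat.factorial (7 + 2 * k) : ℝ) := by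
        have : Nat.factorial 7 ≤ Nat.factorial (7 + 2 * k) :=
          Nat.factorial_le (by omega)
        calc (5040 : ℝ) = (Nat.factorial 7 : ℝ) := by norm_num [Nat.factorial]
        _ ≤ _ := by exact_mod_cast this
      have hFpos : (0 : ℝ) < (Nat.factorial (7 + 2 * k) : ℝ) := by linarith
      have hcpos : (0 : ℝ) < 7 ^ (4 + k) - 1 := by linarith
      have ha : (0 : ℝ) < (2 * π) ^ (7 + 2 * k + 1) :=
        pow_pos (by linarith) _
      have hb : (0 : ℝ) < (2 : ℝ) ^ (7 + 2 * k) := by positivity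
      have ih' : (2 * π) ^ (7 + 2 * k + 1) * 2 ^ (7 + 2 * k) <
          16 * (2 * ((7 : ℝ) ^ (4 + k) - 1) * (Nat.factorial (7 + 2 * k))) := by
        have hd : (0 : ℝ) < 2 * ((7 : ℝ) ^ (4 + k) - 1) * (Nat.factorial (7 + 2 * k)) := by
          positivity
        exact (div_lt_iff₀ hd).mp ih
      -- rewrite the goal
      have e1 : 7 + 2 * (k + 1) + 1 = (7 + 2 * k + 1) + 2 := by ring
      have e2 : 7 + 2 * (k + 1) = (7 + 2 * k) + 2 := by ring
      have e3 : 4 + (k + 1) = (4 + k) + 1 := by ring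
      rw [e1, e2, e3]
      have efact : ((Nat.factorial (7 + 2 * k + 2)) : ℝ) =
          ((7 + 2 * k + 2) : ℝ) * ((7 + 2 * k + 1) : ℝ) * (Nat.factorial (7 + 2 * k) : ℝ) := by
        have : Nat.factorial (7 + 2 * k + 2) =
            (7 + 2 * k + 2) * ((7 + 2 * k + 1) * Nat.factorial (7 + 2 * k)) := by
          rw [Nat.factorial_succ, Nat.factorial_succ]
        rw [this]
        push_cast
        ring
      rw [efact]
      have hd2 : (0 : ℝ) < 2 * ((7 : ℝ) ^ ((4 + k) + 1) - 1) *
          (((7 + 2 * k + 2) : ℝ) * ((7 + 2 * k + 1) : ℝ) * (Nat.factorial (7 + 2 * k) : ℝ)) := by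
        have : (1 : ℝ) < 7 ^ ((4 + k) + 1) := by
          calc (1:ℝ) < 2401 := by norm_num
          _ ≤ 7 ^ (4 + k) := hc
          _ ≤ 7 ^ ((4 + k) + 1) := pow_le_pow_right₀ (by norm_num) (by omega)
        have h7 : (0 : ℝ) < 7 ^ ((4 + k) + 1) - 1 := by linarith
        positivity
      rw [div_lt_iff₀ hd2]
      rw [pow_succ (7:ℝ), pow_add (2*π), pow_add (2:ℝ)]
      have hk : (0:ℝ) ≤ (k:ℝ) := Nat.cast_nonneg k
      have h2pi : (2*π)^2 < 40 := by nlinarith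
      have h2pi0 : (0:ℝ) ≤ (2*π)^2 := by positivity
      have h1 : 4*((7:ℝ)^(4+k)-1)*(2*π)^2 ≤
          (7*(7:ℝ)^(4+k)-1)*(((7:ℝ)+2*(k:ℝ)+2)*((7:ℝ)+2*(k:ℝ)+1)) := by
        nlinarith [mul_nonneg (sub_nonneg.2 h2pi.le) hcpos.le,
          mul_nonneg hk hcpos.le, mul_nonneg (mul_nonneg hk hk) hcpos.le, hc, hk]
      have h2 := mul_le_mul_of_nonneg_right h1 hFpos.le
      have h3 := mul_lt_mul_of_pos_right ih'
        (by positivity : (0:ℝ) < (2*π)^2 * 2^2)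
      nlinarith [h2, h3]

theorem stmt_18 (n : ℕ) (hodd : Odd n) (hn : 7 ≤ n) :
    (2 * π) ^ (n + 1) * 2 ^ n / (2 * ((7 : ℝ) ^ ((n + 1) / 2) - 1) * (Nat.factorial n)) <
      2 * n + 2 := by
  obtain ⟨j, hj⟩ := hodd
  have hm : ∃ m : ℕ, n = 7 + 2 * m := ⟨j - 3, by omega⟩
  obtain ⟨m, rfl⟩ := hm
  have h2 : (7 + 2 * m + 1) / 2 = 4 + m := by omega
  have := aux_stmt_18 m
  rw [h2]
  calc (2 * π) ^ (7 + 2 * m + 1) * 2 ^ (7 + 2 * m) /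
      (2 * ((7 : ℝ) ^ (4 + m) - 1) * (Nat.factorial (7 + 2 * m))) < 16 := this
  _ ≤ 2 * (7 + 2 * m : ℕ) + 2 := by push_cast; linarith [Nat.cast_nonneg (α := ℝ) m]
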